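/- Let k be even with 3 ∤ k, s with gcd(s, 2k) = 1, ω ∈ F_{2^{2k}} of order 3, δ ∈ F_{2^{2k}} \ F_{2^k}, and β, γ ∈ F_{2^{2k}}^* with γ^{2^s+1} + ω β^{2^s+1} + 1 = 0 and γ^{2^k-1} ≠ β^{2^k-1}. Then F(x) = x^{2^s+1} + x^{2^{k+s}+2^k} + (ω β^{2^s+2^k} + γ^{2^s+2^k}) x^{2^{k+s}+1} + (ω β^{2^{k+s}+1} + γ^{2^{k+s}+1}) x^{2^k+2^s} + δ x^{2^k+1} is APN on F_{2^{2k}}: for every nonzero a and every b in F_{2^{2k}}, the equation F(x+a) + F(x) = b has at most 2 solutions x. -/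

import Mathlib

lemma odd_of_gcd {s k : ℕ} (h : Nat.gcd s (2*k) = 1) : Odd s := by
  rcases Nat.even_or_odd s with he | ho
  · exfalso
    have h2 : 2 ∣ Nat.gcd s (2*k) := Nat.dvd_gcd he.two_dvd ⟨k, rfl⟩
    omega
  · exact ho

lemma three_dvd_pow_add_one {s : ℕ} (hs : Odd s) : 3 ∣ 2^s + 1 := by
  have : ((2^s + 1 : ℕ) : ZMod 3) = 0 := by
    push_cast
    rw [show ((2:ZMod 3)) = -1 by decide, hs.neg_one_pow]
    ring
  exact (ZMod.natCast_eq_zero_iff _ _).mp this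

lemma three_dvd_pow_sub_one {k : ℕ} (hke : Even k) : 3 ∣ 2^k - 1 := by
  obtain ⟨m, rfl⟩ := hke
  have h1 : (1:ℕ) ≤ 2^(m+m) := Nat.one_le_two_pow
  have : ((2^(m+m) - 1 : ℕ) : ZMod 3) = 0 := by
    rw [Nat.cast_sub h1]
    push_cast
    rw [show ((2:ZMod 3)) = -1 by decide, ← two_mul, pow_mul]
    norm_num
  exact (ZMod.natCast_eq_zero_iff _ _).mp this

lemma nine_not_dvd {k : ℕ} (hke : Even k) (hk3 : ¬ 3 ∣ k) : ¬ 9 ∣ 2^k - 1 := by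
  obtain ⟨m, rfl⟩ := hke
  have hm3 : ¬ 3 ∣ m := by omega
  intro hdvd
  have h1 : (1:ℕ) ≤ 2^(m+m) := Nat.one_le_two_pow
  have h9 : ((2^(m+m) - 1 : ℕ) : ZMod 9) = 0 := (ZMod.natCast_eq_zero_iff _ _).mpr hdvd
  rw [Nat.cast_sub h1] at h9
  push_cast at h9
  rw [← two_mul, pow_mul] at h9
  have h4 : ((2:ZMod 9)^2) = 4 := by decide
  rw [h4] at h9
  have hm : m % 3 = 1 ∨ m % 3 = 2 := by omega
  have key : (4 : ZMod 9)^m = 4^(m % 3) := by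
    conv_lhs => rw [← Nat.div_add_mod m 3]
    rw [pow_add, pow_mul]
    norm_num
    rw [show (64:ZMod 9) = 1 by decide, one_pow, one_mul]
  rcases hm with h | h <;> rw [key, h] at h9 <;> revert h9 <;> decide

lemma pow_pow_fixed {F : Type*} [Monoid F] (u : F) (d : ℕ) (h : u^(2^d) = u) :
    ∀ j : ℕ, u^(2^(d*j)) = u := by
  intro j
  induction j with
  | zero => simp
  | succ n ih => rw [Nat.mul_succ, pow_add, pow_mul, ih, h]

/-- The linearized map `L_a(x)` associated to `apnFun`. -/
def LL {F : Type*} [Field F] (k s : ℕ) (c1 c2 δ a x : F) : F :=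
  (x^(2^s)*a + a^(2^s)*x) + ((x^(2^k))^(2^s)*a^(2^k) + (a^(2^k))^(2^s)*x^(2^k))
  + c1*((x^(2^k))^(2^s)*a + (a^(2^k))^(2^s)*x) + c2*(x^(2^s)*a^(2^k) + a^(2^s)*x^(2^k))
  + δ*(x*a^(2^k) + a*x^(2^k))

/-- The 5-term function `F(x)` of Theorem `newapn`. -/
def apnFun {F : Type*} [Field F] (k s : ℕ) (ω β γ δ : F) (x : F) : F :=
  x ^ (2 ^ s + 1) + x ^ (2 ^ (k + s) + 2 ^ k)
    + (ω * β ^ (2 ^ s + 2 ^ k) + γ ^ (2 ^ s + 2 ^ k)) * x ^ (2 ^ (k + s) + 1)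
    + (ω * β ^ (2 ^ (k + s) + 1) + γ ^ (2 ^ (k + s) + 1)) * x ^ (2 ^ k + 2 ^ s)
    + δ * x ^ (2 ^ k + 1)

/-- Under the hypotheses of Theorem `newapn`, the function `F`
is APN on `F_{2^{2k}}`: for every `a ≠ 0` and every `b`, the equation
`F(x+a) + F(x) = b` has at most 2 solutions. -/
theorem stmt12 (F : Type*) [Field F] [Fintype F] [DecidableEq F] (k s : ℕ) (hk : 0 < k)
    (hke : Even k) (hk3 : ¬ 3 ∣ k)
    (hcard : Fintype.card F = 2 ^ (2 * k)) (hgcd : Nat.gcd s (2 * k) = 1)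
    (ω : F) (hω : orderOf ω = 3)
    (δ : F) (hδ : δ ^ 2 ^ k ≠ δ)
    (β γ : F) (hβ : β ≠ 0) (hγ : γ ≠ 0)
    (h1 : γ ^ (2 ^ s + 1) + ω * β ^ (2 ^ s + 1) + 1 = 0)
    (h2 : γ ^ (2 ^ k - 1) ≠ β ^ (2 ^ k - 1)) :
    ∀ a b : F, a ≠ 0 →
      (Finset.univ.filter fun x : F =>
        apnFun k s ω β γ δ (x + a) + apnFun k s ω β γ δ x = b).card ≤ 2 := by
  -- characteristic 2
  haveI hchar : CharP F 2 := by
    obtain ⟨n, pp, hc⟩ := FiniteField.card F (ringChar F)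
    have h2c : ringChar F = 2 := by
      have hd : ringChar F ∣ 2^(2*k) := by
        rw [← hcard, hc]; exact dvd_pow_self _ (by positivity)
      have := pp.dvd_of_dvd_pow (n := 2*k) hd
      exact (Nat.prime_dvd_prime_iff_eq pp Nat.prime_two).mp this
    rw [← h2c]; infer_instance
  haveI : Fact (Nat.Prime 2) := ⟨Nat.prime_two⟩
  have htwo : (2:F) = 0 := by exact_mod_cast CharP.cast_eq_zero F 2
  have haddk : ∀ x y : F, (x+y)^(2^k) = x^(2^k)+y^(2^k) := fun x y => add_pow_char_pow x y 2 k
  have hadds : ∀ x y : F, (x+y)^(2^s) = x^(2^s)+y^(2^s) := fun x y => add_pow_char_pow x y 2 s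
  have hQQ : ∀ x : F, (x^(2^k))^(2^k) = x := by
    intro x
    rw [← pow_mul, show 2^k*2^k = 2^(2*k) by rw [← pow_add, two_mul], ← hcard,
      FiniteField.pow_card]
  have hcomm : ∀ x : F, (x^(2^s))^(2^k) = (x^(2^k))^(2^s) := fun x => pow_right_comm x _ _
  -- ω facts
  have hω3 : ω^3 = 1 := by rw [← hω, pow_orderOf_eq_one]
  have hωne : ω ≠ 0 := by
    intro h; rw [h] at hω3; simp at hω3
  obtain ⟨e0, he0⟩ := three_dvd_pow_sub_one hke
  have h2kpos : (1:ℕ) ≤ 2^k := Nat.one_le_two_pow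
  have hωk : ω^(2^k) = ω := by
    rw [show 2^k = 3*e0+1 by omega, pow_add, pow_mul, hω3, one_pow, pow_one, one_mul]
  -- normal form of apnFun
  have hFx : ∀ x : F, apnFun k s ω β γ δ x
      = x^(2^s)*x + (x^(2^k))^(2^s)*x^(2^k)
        + (ω*(β^(2^s)*β^(2^k)) + γ^(2^s)*γ^(2^k))*((x^(2^k))^(2^s)*x) + (ω*((β^(2^k))^(2^s)*β) + (γ^(2^k))^(2^s)*γ)*(x^(2^s)*x^(2^k)) + δ*(x^(2^k)*x) := by
    intro x
    unfold apnFun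
    simp only [pow_add, pow_mul, pow_one]
    ring
  -- h1 in normal form and its conjugate
  have h1a : γ^(2^s)*γ + ω*(β^(2^s)*β) = 1 := by
    have h := h1
    simp only [pow_add, pow_one] at h
    linear_combination h - htwo
  have h1b : (γ^(2^k))^(2^s)*γ^(2^k) + ω*((β^(2^k))^(2^s)*β^(2^k)) = 1 := by
    have h := congrArg (fun w : F => w^(2^k)) h1a
    simp only [haddk, mul_pow, hcomm, hQQ, hωk, one_pow] at h
    linear_combination h
  -- polarization identity
  have hL : ∀ a x : F, apnFun k s ω β γ δ (x+a) + apnFun k s ω β γ δ x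
      + apnFun k s ω β γ δ a = LL k s (ω*(β^(2^s)*β^(2^k)) + γ^(2^s)*γ^(2^k)) (ω*((β^(2^k))^(2^s)*β) + (γ^(2^k))^(2^s)*γ) δ a x := by
    intro a x
    rw [hFx, hFx, hFx]
    unfold LL
    simp only [haddk, hadds]
    linear_combination (x^(2^s)*x + (x^(2^k))^(2^s)*x^(2^k)
      + (ω*(β^(2^s)*β^(2^k)) + γ^(2^s)*γ^(2^k))*((x^(2^k))^(2^s)*x) + (ω*((β^(2^k))^(2^s)*β) + (γ^(2^k))^(2^s)*γ)*(x^(2^s)*x^(2^k)) + δ*(x^(2^k)*x)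
      + a^(2^s)*a + (a^(2^k))^(2^s)*a^(2^k)
      + (ω*(β^(2^s)*β^(2^k)) + γ^(2^s)*γ^(2^k))*((a^(2^k))^(2^s)*a) + (ω*((β^(2^k))^(2^s)*β) + (γ^(2^k))^(2^s)*γ)*(a^(2^s)*a^(2^k)) + δ*(a^(2^k)*a)) * htwo
  -- additivity of LL
  have hLadd : ∀ a x y : F, LL k s (ω*(β^(2^s)*β^(2^k)) + γ^(2^s)*γ^(2^k)) (ω*((β^(2^k))^(2^s)*β) + (γ^(2^k))^(2^s)*γ) δ a (x+y)
      = LL k s (ω*(β^(2^s)*β^(2^k)) + γ^(2^s)*γ^(2^k)) (ω*((β^(2^k))^(2^s)*β) + (γ^(2^k))^(2^s)*γ) δ a x + LL k s (ω*(β^(2^s)*β^(2^k)) + γ^(2^s)*γ^(2^k)) (ω*((β^(2^k))^(2^s)*β) + (γ^(2^k))^(2^s)*γ) δ a y := by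
    intro a x y
    unfold LL
    simp only [haddk, hadds]
    ring
  -- the kernel lemma
  have hker : ∀ a z : F, a ≠ 0 → LL k s (ω*(β^(2^s)*β^(2^k)) + γ^(2^s)*γ^(2^k)) (ω*((β^(2^k))^(2^s)*β) + (γ^(2^k))^(2^s)*γ) δ a z = 0 → z = 0 ∨ z = a := by
    intro a z ha hz
    unfold LL at hz
    -- conjugate the equation
    have hz2 : ((z^(2^k))^(2^s)*a^(2^k) + (a^(2^k))^(2^s)*z^(2^k))
        + (z^(2^s)*a + a^(2^s)*z)
        + (ω*((β^(2^k))^(2^s)*β) + (γ^(2^k))^(2^s)*γ)*(z^(2^s)*a^(2^k) + a^(2^s)*z^(2^k)) + (ω*(β^(2^s)*β^(2^k)) + γ^(2^s)*γ^(2^k))*((z^(2^k))^(2^s)*a + (a^(2^k))^(2^s)*z)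
        + δ^(2^k)*(z^(2^k)*a + a^(2^k)*z) = 0 := by
      have h := congrArg (fun w : F => w^(2^k)) hz
      simp only [haddk, mul_pow, hcomm, hQQ, hωk,
        zero_pow (Nat.two_pow_pos k).ne'] at h
      linear_combination h
    -- use δ ∉ F_q to deduce z * ā = a * z̄
    have hδne : δ^(2^k) + δ ≠ 0 := by
      intro h
      exact hδ (by linear_combination h - δ * htwo)
    have hWkey : (δ^(2^k) + δ) * (z*a^(2^k) + a*z^(2^k)) = 0 := by
      linear_combination hz + hz2 - (z^(2^s)*a + a^(2^s)*z + ((z^(2^k))^(2^s)*a^(2^k) + (a^(2^k))^(2^s)*z^(2^k)) + (ω*(β^(2^s)*β^(2^k)) + γ^(2^s)*γ^(2^k))*((z^(2^k))^(2^s)*a + (a^(2^k))^(2^s)*z) + (ω*((β^(2^k))^(2^s)*β) + (γ^(2^k))^(2^s)*γ)*(z^(2^s)*a^(2^k) + a^(2^s)*z^(2^k)))*htwo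
    have hW : z*a^(2^k) = a*z^(2^k) := by
      rcases mul_eq_zero.mp hWkey with h | h
      · exact absurd h hδne
      · linear_combination h - (a*z^(2^k))*htwo
    have hA2 : a^(2^k) ≠ 0 := pow_ne_zero _ ha
    -- u := z/a lies in the subfield F_q
    obtain ⟨u, hzu⟩ : ∃ u : F, z = u * a := ⟨z * a⁻¹, by field_simp⟩
    have huk : u^(2^k) = u := by
      have h := congrArg (fun w : F => w^(2^k)) hzu
      simp only [mul_pow] at h
      -- h : z^(2^k) = u^(2^k) * a^(2^k)
      have h' : u^(2^k) * a^(2^k) = u * a^(2^k) := by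
        rw [← h]
        have : a * z^(2^k) = a * (u * a^(2^k)) := by
          rw [← hW, hzu]; ring
        have h2' := mul_left_cancel₀ ha this
        linear_combination h2'
      exact mul_right_cancel₀ hA2 h'
    -- plug z = u·a into the linear equation
    have hfac : (u^(2^s)+u) * (a^(2^s)*a + (a^(2^k))^(2^s)*a^(2^k)
        + (ω*(β^(2^s)*β^(2^k)) + γ^(2^s)*γ^(2^k))*((a^(2^k))^(2^s)*a) + (ω*((β^(2^k))^(2^s)*β) + (γ^(2^k))^(2^s)*γ)*(a^(2^s)*a^(2^k))) = 0 := by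
      rw [hzu] at hz
      simp only [mul_pow, huk] at hz
      linear_combination hz - (δ*(u*(a^(2^k))*a))*htwo
    -- the key nonvanishing: G(a) ≠ 0
    have hGne : (a^(2^s)*a + (a^(2^k))^(2^s)*a^(2^k)
        + (ω*(β^(2^s)*β^(2^k)) + γ^(2^s)*γ^(2^k))*((a^(2^k))^(2^s)*a) + (ω*((β^(2^k))^(2^s)*β) + (γ^(2^k))^(2^s)*γ)*(a^(2^s)*a^(2^k))) ≠ 0 := by
      intro hG
      obtain ⟨t, htdef⟩ : ∃ t : F, a^(2^k) = t * a := ⟨a^(2^k) * a⁻¹, by field_simp⟩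
      have htne : t ≠ 0 := by
        intro h; rw [h, zero_mul] at htdef; exact hA2 htdef
      have htk : t^(2^k) * t = 1 := by
        have h := congrArg (fun w : F => w^(2^k)) htdef
        simp only [mul_pow, hQQ] at h
        -- h : a = t^(2^k) * a^(2^k)
        rw [htdef] at h
        have h' : (t^(2^k)*t)*a = 1*a := by linear_combination -h
        exact mul_right_cancel₀ ha h'
      have hA1 : a^(2^s) ≠ 0 := pow_ne_zero _ ha
      have hP : (a^(2^s)*a) * (1 + t^(2^s)*t + (ω*(β^(2^s)*β^(2^k)) + γ^(2^s)*γ^(2^k))*t^(2^s) + (ω*((β^(2^k))^(2^s)*β) + (γ^(2^k))^(2^s)*γ)*t) = 0 := by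
        rw [htdef] at hG
        simp only [mul_pow] at hG
        linear_combination hG
      have hP0 : 1 + t^(2^s)*t + (ω*(β^(2^s)*β^(2^k)) + γ^(2^s)*γ^(2^k))*t^(2^s) + (ω*((β^(2^k))^(2^s)*β) + (γ^(2^k))^(2^s)*γ)*t = 0 := by
        rcases mul_eq_zero.mp hP with h | h
        · exact absurd h (mul_ne_zero hA1 ha)
        · exact h
      -- factorization P(t) = U^(σ+1) + ω V^(σ+1)
      have hfact : (γ*t + γ^(2^k))^(2^s)*(γ*t + γ^(2^k)) + ω*((β*t + β^(2^k))^(2^s)*(β*t + β^(2^k))) = 0 := by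
        simp only [hadds, mul_pow]
        linear_combination (t^(2^s)*t)*h1a + h1b + hP0
      by_cases hV : (β*t + β^(2^k)) = 0
      · -- degenerate case: contradicts γ^(q-1) ≠ β^(q-1)
        have hU : (γ*t + γ^(2^k))^(2^s) * (γ*t + γ^(2^k)) = 0 := by
          rw [hV] at hfact; linear_combination hfact
        have hU0 : (γ*t + γ^(2^k)) = 0 := by
          rcases mul_eq_zero.mp hU with h | h
          · exact (pow_eq_zero_iff (Nat.two_pow_pos s).ne').mp h
          · exact h
        have hg : γ*t = γ^(2^k) := by linear_combination hU0 - γ^(2^k)*htwo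
        have hb : β*t = β^(2^k) := by linear_combination hV - β^(2^k)*htwo
        have hcross : γ^(2^k) * β = β^(2^k) * γ := by linear_combination γ*hb - β*hg
        have hpow : 2^k - 1 + 1 = 2^k := by omega
        have hγp : γ^(2^k) = γ^(2^k-1)*γ := by conv_lhs => rw [← hpow, pow_succ]
        have hβp : β^(2^k) = β^(2^k-1)*β := by conv_lhs => rw [← hpow, pow_succ]
        rw [hγp, hβp] at hcross
        exact h2 (mul_right_cancel₀ (mul_ne_zero hγ hβ)
          (show γ^(2^k-1)*(γ*β) = β^(2^k-1)*(γ*β) by linear_combination hcross))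
      · -- main case: r = U/V satisfies r^(2^s+1) = ω, r ∈ F_q^*
        have hVs : (β*t + β^(2^k))^(2^s) ≠ 0 := pow_ne_zero _ hV
        obtain ⟨r, hrdef⟩ : ∃ r : F, (γ*t + γ^(2^k)) = r * (β*t + β^(2^k)) :=
          ⟨(γ*t + γ^(2^k)) * (β*t + β^(2^k))⁻¹, by rw [mul_assoc, inv_mul_cancel₀ hV, mul_one]⟩
        have hrw : r^(2^s) * r = ω := by
          rw [hrdef] at hfact
          simp only [mul_pow] at hfact
          have hne : (β*t + β^(2^k))^(2^s) * (β*t + β^(2^k)) ≠ 0 := mul_ne_zero hVs hV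
          have h' : (r^(2^s)*r) * ((β*t + β^(2^k))^(2^s)*(β*t + β^(2^k))) = ω * ((β*t + β^(2^k))^(2^s)*(β*t + β^(2^k))) := by
            linear_combination hfact - (ω*((β*t + β^(2^k))^(2^s)*(β*t + β^(2^k))))*htwo
          exact mul_right_cancel₀ hne h'
        have hrk : r^(2^k) = r := by
          have h := congrArg (fun w : F => w^(2^k)) hrdef
          simp only [haddk, mul_pow, hQQ] at h
          -- h : γ^(2^k) * t^(2^k) + γ = r^(2^k) * (β^(2^k) * t^(2^k) + β)
          have hmul := congrArg (fun w : F => w * t) h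
          have h' : (γ*t + γ^(2^k)) = r^(2^k) * (β*t + β^(2^k)) := by
            linear_combination hmul - (γ^(2^k) - r^(2^k)*β^(2^k))*htk
          have h'' : r * (β*t + β^(2^k)) = r^(2^k) * (β*t + β^(2^k)) := by rw [← hrdef, h']
          exact (mul_right_cancel₀ hV h'').symm
        have hrne : r ≠ 0 := by
          intro h; rw [h, mul_zero] at hrw; exact hωne hrw.symm
        have hr1 : r^(2^k - 1) = 1 := by
          have hpow : 2^k - 1 + 1 = 2^k := by omega
          have h' : r^(2^k-1)*r = 1*r := by rw [← pow_succ, hpow, hrk, one_mul]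
          exact mul_right_cancel₀ hrne h'
        have hrs : r^(2^s+1) = ω := by rw [pow_add, pow_one]; exact hrw
        obtain ⟨A, hA⟩ := three_dvd_pow_add_one (odd_of_gcd hgcd)
        have hωe : ω^e0 = 1 := by
          calc ω^e0 = (r^(2^s+1))^e0 := by rw [hrs]
          _ = r^((2^s+1)*e0) := by rw [← pow_mul]
          _ = (r^(2^k-1))^A := by rw [← pow_mul]; congr 1; rw [hA, he0]; ring
          _ = 1 := by rw [hr1, one_pow]
        have h3e : (3:ℕ) ∣ e0 := by
          have hdvd := orderOf_dvd_of_pow_eq_one hωe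
          rwa [hω] at hdvd
        exact nine_not_dvd hke hk3 (by omega)
    -- conclude: u^(2^s) = u, hence u ∈ F_2
    have husigma : u^(2^s) = u := by
      rcases mul_eq_zero.mp hfac with h | h
      · linear_combination h - u*htwo
      · exact absurd h hGne
    have h2k1 : 1 < 2*k := by omega
    obtain ⟨m, -, hm⟩ := Nat.exists_mul_mod_eq_one_of_coprime hgcd h2k1
    have hu2k : u^(2^(2*k)) = u := by rw [← hcard, FiniteField.pow_card]
    have hj1 : u^(2^(s*m)) = u := pow_pow_fixed u s husigma m
    have hsm : s*m = 2*k*((s*m)/(2*k)) + 1 := by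
      have := Nat.div_add_mod (s*m) (2*k); omega
    have hu2 : u^2 = u := by
      have hfix := pow_pow_fixed u (2*k) hu2k ((s*m)/(2*k))
      calc u^2 = (u^(2^(2*k*((s*m)/(2*k)))))^2 := by rw [hfix]
      _ = u^(2^(2*k*((s*m)/(2*k))) * 2) := (pow_mul u _ 2).symm
      _ = u^(2^(2*k*((s*m)/(2*k)) + 1)) := by rw [← pow_succ]
      _ = u^(2^(s*m)) := by rw [← hsm]
      _ = u := hj1
    rcases mul_eq_zero.mp (show u*(u-1) = 0 by linear_combination hu2) with h | h
    · left; rw [hzu, h, zero_mul]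
    · right; rw [hzu, sub_eq_zero.mp h, one_mul]
  -- conclusion
  intro a b ha
  set S := Finset.univ.filter fun x : F =>
    apnFun k s ω β γ δ (x + a) + apnFun k s ω β γ δ x = b with hS
  rcases S.eq_empty_or_nonempty with hemp | ⟨x0, hx0⟩
  · rw [hemp]; simp
  · have hmem : ∀ x, x ∈ S → LL k s (ω*(β^(2^s)*β^(2^k)) + γ^(2^s)*γ^(2^k)) (ω*((β^(2^k))^(2^s)*β) + (γ^(2^k))^(2^s)*γ) δ a x = b + apnFun k s ω β γ δ a := by
      intro x hx
      rw [hS, Finset.mem_filter] at hx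
      linear_combination hx.2 - hL a x
    have hsub : S ⊆ {x0, x0 + a} := by
      intro y hy
      have h0 : LL k s (ω*(β^(2^s)*β^(2^k)) + γ^(2^s)*γ^(2^k)) (ω*((β^(2^k))^(2^s)*β) + (γ^(2^k))^(2^s)*γ) δ a (y + x0) = 0 := by
        rw [hLadd, hmem y hy, hmem x0 hx0]
        linear_combination (b + apnFun k s ω β γ δ a) * htwo
      rcases hker a (y + x0) ha h0 with h | h
      · have : y = x0 := by linear_combination h - x0 * htwo
        simp [this]
      · have : y = x0 + a := by linear_combination h - x0 * htwo
        simp [this]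
    calc S.card ≤ ({x0, x0+a} : Finset F).card := Finset.card_le_card hsub
    _ ≤ 2 := by
      apply le_trans (Finset.card_insert_le _ _)
      simp
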